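/- Let N ∈ ℕ with N > 0. Fix arrays C : Fin N → Fin 4 → Fin N → Fin 4 → ℝ (written C B m A n for the vertical coefficients C^{Bm}_{An}), N₀ : Fin N → ℝ (the expansion point), K : Fin 4 → Fin 4 → ℝ, a : Fin N → ℝ and a₂ : Fin N → Fin N → ℝ. Assume: (i) K is traceless, ∑_m K m m = 0; (ii) the expansion point is invariant under K: for every A : Fin N, ∑_{D,m,n} N₀ D * C D m A n * K n m = 0; (iii) the second-order coefficient equation holds: for all B : Fin N and m, n : Fin 4, (∑_A a A * C B m A n) + 2·(∑_{A,D} a₂ A B * C D m A n * N₀ D) + a B * (if m = n then 1 else 0) = 0. Then the first-order coefficient a is itself invariant under K: for every B : Fin N, ∑_{A,m,n} a A * C B m A n * K n m = 0. -/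

import Mathlib

/-- Contracting the first equation of the second-order expansion-coefficient
system with a traceless generator `K` leaving the expansion point `N₀` invariant shows that the
first-order expansion coefficient `a` is itself invariant under `K`. -/
theorem first_order_coefficient_lorentz_invariant
    (N : ℕ) (hN : 0 < N)
    (C : Fin N → Fin 4 → Fin N → Fin 4 → ℝ)
    (N₀ : Fin N → ℝ)
    (K : Fin 4 → Fin 4 → ℝ)
    (a : Fin N → ℝ)
    (a₂ : Fin N → Fin N → ℝ)
    (hKtrace : ∑ m, K m m = 0)
    (hN₀inv : ∀ A : Fin N, ∑ D, ∑ m, ∑ n, N₀ D * C D m A n * K n m = 0)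
    (hcoeff : ∀ (B : Fin N) (m n : Fin 4),
      (∑ A, a A * C B m A n)
        + 2 * (∑ A, ∑ D, a₂ A B * C D m A n * N₀ D)
        + a B * (if m = n then 1 else 0) = 0) :
    ∀ B : Fin N, ∑ A, ∑ m, ∑ n, a A * C B m A n * K n m = 0 := by
  intro B
  have hz : ∀ m n : Fin 4, ((∑ A, a A * C B m A n)
        + 2 * (∑ A, ∑ D, a₂ A B * C D m A n * N₀ D)
        + a B * (if m = n then 1 else 0)) * K n m = 0 := by
    intro m n; rw [hcoeff]; ring
  have key : ∑ m, ∑ n, ((∑ A, a A * C B m A n)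
        + 2 * (∑ A, ∑ D, a₂ A B * C D m A n * N₀ D)
        + a B * (if m = n then 1 else 0)) * K n m = 0 :=
    Finset.sum_eq_zero fun m _ => Finset.sum_eq_zero fun n _ => hz m n
  have hT1 : ∑ m, ∑ n, (∑ A, a A * C B m A n) * K n m
      = ∑ A, ∑ m, ∑ n, a A * C B m A n * K n m := by
    simp only [Finset.sum_mul]
    rw [Finset.sum_congr rfl fun m (_ : m ∈ Finset.univ) => Finset.sum_comm, Finset.sum_comm]
  have hT2 : ∑ m, ∑ n, (∑ A, ∑ D, a₂ A B * C D m A n * N₀ D) * K n m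
      = ∑ A, a₂ A B * (∑ D, ∑ m, ∑ n, N₀ D * C D m A n * K n m) := by
    simp only [Finset.sum_mul, Finset.mul_sum]
    rw [Finset.sum_congr rfl fun m (_ : m ∈ Finset.univ) => Finset.sum_comm, Finset.sum_comm]
    refine Finset.sum_congr rfl fun A _ => ?_
    rw [Finset.sum_congr rfl fun m (_ : m ∈ Finset.univ) => Finset.sum_comm, Finset.sum_comm]
    refine Finset.sum_congr rfl fun D _ => Finset.sum_congr rfl fun m _ =>
      Finset.sum_congr rfl fun n _ => by ring
  have hT3 : ∑ m, ∑ n, (a B * (if m = n then 1 else 0)) * K n m = a B * ∑ m, K m m := by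
    simp [Finset.mul_sum, ite_mul, Finset.sum_ite_eq]
  have expand : ∑ m, ∑ n, ((∑ A, a A * C B m A n)
        + 2 * (∑ A, ∑ D, a₂ A B * C D m A n * N₀ D)
        + a B * (if m = n then 1 else 0)) * K n m
      = (∑ A, ∑ m, ∑ n, a A * C B m A n * K n m)
        + 2 * (∑ A, a₂ A B * (∑ D, ∑ m, ∑ n, N₀ D * C D m A n * K n m))
        + a B * ∑ m, K m m := by
    rw [← hT1, ← hT2, ← hT3]
    simp only [add_mul, Finset.sum_add_distrib, Finset.mul_sum]
    ring_nf
    simp only [Finset.sum_mul, Finset.mul_sum]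
    ring_nf
  rw [expand, hKtrace, mul_zero, add_zero] at key
  simpa [hN₀inv] using key
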